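/- (Erdős–Mordell Inequality) Let P be a point inside or on the boundary of a triangle ABC in the Euclidean plane. Then the sum of the distances from P to the three vertices is at least twice the sum of the distances from P to the three side lines: dist P A + dist P B + dist P C ≥ 2 · (d(P, line BC) + d(P, line CA) + d(P, line AB)). -/

import Mathlib

set_option linter.all false
set_option maxHeartbeats 1000000

open Real

local notation "E2" => EuclideanSpace ℝ (Fin 2)




private lemma em_sq_zero {u v : ℝ} (h : u^2 + v^2 ≤ 0) : u = 0 ∧ v = 0 := by
  have hu : u^2 = 0 := le_antisymm (by linarith [sq_nonneg v]) (sq_nonneg u)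
  have hv : v^2 = 0 := le_antisymm (by linarith [sq_nonneg u]) (sq_nonneg v)
  constructor
  · exact pow_eq_zero_iff two_ne_zero |>.mp hu
  · exact pow_eq_zero_iff two_ne_zero |>.mp hv

/-- distance in coordinates -/
private lemma em_dist2 (X Y : E2) :
    dist X Y = Real.sqrt ((X 0 - Y 0)^2 + (X 1 - Y 1)^2) := by
  rw [EuclideanSpace.dist_eq, Fin.sum_univ_two]
  simp [Real.dist_eq, sq_abs]

/-- the abstract sqrt key lemma -/
private lemma em_key_sqrt (qa qb qc qp L R : ℝ) (hqa : 0 ≤ qa) (hqb : 0 ≤ qb)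
    (hqc : 0 ≤ qc) (hqp : 0 ≤ qp) (hL : 0 ≤ L)
    (hid : L^2 + R^2 = qa*qb*qc*qp) :
    L ≤ Real.sqrt qa * Real.sqrt qb * Real.sqrt qc * Real.sqrt qp := by
  have h : Real.sqrt qa * Real.sqrt qb * Real.sqrt qc * Real.sqrt qp
      = Real.sqrt (qa*qb*qc*qp) := by
    rw [← Real.sqrt_mul hqa, ← Real.sqrt_mul (mul_nonneg hqa hqb),
      ← Real.sqrt_mul (mul_nonneg (mul_nonneg hqa hqb) hqc)]
  rw [h, Real.le_sqrt hL (by positivity)]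
  linarith [sq_nonneg R]

/-- abs of same-sign pair -/
private lemma em_abs_pair {d x y : ℝ} (hd : d ≠ 0) (hx : 0 ≤ d*x) (hy : 0 ≤ d*y)
    (q r : ℝ) : (q*|x| + r*|y|)^2 = (q*x + r*y)^2 := by
  have hxy : 0 ≤ x*y := by
    have e : x*y = ((d*x)*(d*y))/(d^2) := by field_simp
    rw [e]
    positivity
  have h1 : |x| * |y| = x*y := by rw [← abs_mul, abs_of_nonneg hxy]
  have h2 : |x|^2 = x^2 := sq_abs x
  have h3 : |y|^2 = y^2 := sq_abs y
  linear_combination (q^2)*h2 + (r^2)*h3 + (2*q*r)*h1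

/-- the vertex ring identity -/
private lemma em_vertex_id (a1 a2 b1 b2 c1 c2 p1 p2 : ℝ) :
    (((a1-b1)^2+(a2-b2)^2) * ((a1-c1)*(p2-c2)-(a2-c2)*(p1-c1))
      + ((c1-a1)^2+(c2-a2)^2) * ((b1-a1)*(p2-a2)-(b2-a2)*(p1-a1)))^2
    + (((b1-a1)*(a1-c1)-(b2-a2)*(a2-c2))*((b1-c1)*(p1-a1)-(b2-c2)*(p2-a2))
       + ((b1-a1)*(a2-c2)+(b2-a2)*(a1-c1))*((b1-c1)*(p2-a2)+(b2-c2)*(p1-a1)))^2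
    = ((b1-c1)^2+(b2-c2)^2) * (((c1-a1)^2+(c2-a2)^2) * (((a1-b1)^2+(a2-b2)^2)
        * ((p1-a1)^2+(p2-a2)^2))) := by
  ring

/-- infDist to a line through two points, upper bound by foot of perpendicular -/
private lemma em_infdist_le (B C P : E2)
    (hq : 0 < (C 0 - B 0)^2 + (C 1 - B 1)^2) :
    Metric.infDist P (affineSpan ℝ ({B, C} : Set E2) : Set _) ≤
      |(C 0 - B 0)*(P 1 - B 1) - (C 1 - B 1)*(P 0 - B 0)| /
        Real.sqrt ((C 0 - B 0)^2 + (C 1 - B 1)^2) := by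
  set q : ℝ := (C 0 - B 0)^2 + (C 1 - B 1)^2 with hqdef
  set r : ℝ := ((P 0 - B 0)*(C 0 - B 0) + (P 1 - B 1)*(C 1 - B 1))/q with hrdef
  have hmem := AffineMap.lineMap_mem_affineSpan_pair r B C
  refine le_trans (Metric.infDist_le_dist_of_mem hmem) ?_
  have e0 : (AffineMap.lineMap B C r : E2) 0 = B 0 + r*(C 0 - B 0) := by
    simp [AffineMap.lineMap_apply]
    ring
  have e1 : (AffineMap.lineMap B C r : E2) 1 = B 1 + r*(C 1 - B 1) := by
    simp [AffineMap.lineMap_apply]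
    ring
  rw [em_dist2, e0, e1]
  have hkey : (P 0 - (B 0 + r*(C 0 - B 0)))^2 + (P 1 - (B 1 + r*(C 1 - B 1)))^2
      = (|(C 0 - B 0)*(P 1 - B 1) - (C 1 - B 1)*(P 0 - B 0)| / Real.sqrt q)^2 := by
    rw [div_pow, sq_abs, Real.sq_sqrt hq.le, hrdef]
    field_simp
    ring
  rw [hkey, Real.sqrt_sq (by positivity)]



private lemma em_det_ne_zero (A B C : E2) (h : AffineIndependent ℝ ![A, B, C]) :
    (B 0 - A 0)*(C 1 - A 1) - (B 1 - A 1)*(C 0 - A 0) ≠ 0 := by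
  intro hd
  rw [affineIndependent_iff_not_collinear] at h
  apply h
  have hr : Set.range ![A, B, C] = ({A, B, C} : Set E2) := by
    ext x
    simp [Fin.exists_fin_succ, Matrix.cons_val_zero, Matrix.cons_val_one]
    tauto
  rw [hr, collinear_iff_of_mem (Set.mem_insert A _)]
  by_cases hBA : B = A
  · refine ⟨C -ᵥ A, ?_⟩
    intro p hp
    simp only [Set.mem_insert_iff, Set.mem_singleton_iff] at hp
    rcases hp with rfl | rfl | rfl
    · exact ⟨0, by simp⟩
    · exact ⟨0, by simp [hBA]⟩
    · exact ⟨1, by simp⟩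
  · have hq : 0 < (B 0 - A 0)^2 + (B 1 - A 1)^2 := by
      by_contra hq
      push_neg at hq
      obtain ⟨h0, h1⟩ := em_sq_zero hq
      apply hBA
      ext i
      fin_cases i
      · show B 0 = A 0
        linarith
      · show B 1 = A 1
        linarith
    refine ⟨B -ᵥ A, ?_⟩
    intro p hp
    simp only [Set.mem_insert_iff, Set.mem_singleton_iff] at hp
    rcases hp with rfl | rfl | rfl
    · exact ⟨0, by simp⟩
    · exact ⟨1, by simp⟩
    · refine ⟨((p 0 - A 0)*(B 0 - A 0) + (p 1 - A 1)*(B 1 - A 1)) /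
        ((B 0 - A 0)^2 + (B 1 - A 1)^2), ?_⟩
      ext i
      have happ : ∀ (r : ℝ) (i : Fin 2), (r • (B -ᵥ A) +ᵥ A) i = r * (B i - A i) + A i := by
        intro r i
        rfl
      rw [happ]
      fin_cases i
      · simp only [Fin.zero_eta, Fin.mk_one, Fin.isValue]
        field_simp
        linear_combination (-(B 1 - A 1)) * hd
      · simp only [Fin.zero_eta, Fin.mk_one, Fin.isValue]
        field_simp
        linear_combination (B 0 - A 0) * hd


private lemma em_sign (A B C P : E2) (hP : P ∈ convexHull ℝ ({A, B, C} : Set E2)) :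
    0 ≤ ((B 0 - A 0)*(C 1 - A 1) - (B 1 - A 1)*(C 0 - A 0)) *
        ((C 0 - B 0)*(P 1 - B 1) - (C 1 - B 1)*(P 0 - B 0)) := by
  set d : ℝ := (B 0 - A 0)*(C 1 - A 1) - (B 1 - A 1)*(C 0 - A 0) with hddef
  have hconv : Convex ℝ {Q : E2 | 0 ≤ d * ((C 0 - B 0)*(Q 1 - B 1) - (C 1 - B 1)*(Q 0 - B 0))} := by
    intro x hx y hy σ τ hσ hτ hστ
    simp only [Set.mem_setOf_eq] at hx hy ⊢
    have e0 : (σ • x + τ • y) 0 = σ * x 0 + τ * y 0 := rfl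
    have e1 : (σ • x + τ • y) 1 = σ * x 1 + τ * y 1 := rfl
    have hτ' : τ = 1 - σ := by linarith
    subst hτ'
    have key : d * ((C 0 - B 0)*((σ • x + (1-σ) • y) 1 - B 1)
        - (C 1 - B 1)*((σ • x + (1-σ) • y) 0 - B 0))
        = σ * (d * ((C 0 - B 0)*(x 1 - B 1) - (C 1 - B 1)*(x 0 - B 0)))
          + (1-σ) * (d * ((C 0 - B 0)*(y 1 - B 1) - (C 1 - B 1)*(y 0 - B 0))) := by
      rw [e0, e1]
      ring
    rw [key]
    have h1σ : (0:ℝ) ≤ 1 - σ := by linarith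
    exact add_nonneg (mul_nonneg hσ hx) (mul_nonneg h1σ hy)
  have hsub : ({A, B, C} : Set E2) ⊆
      {Q : E2 | 0 ≤ d * ((C 0 - B 0)*(Q 1 - B 1) - (C 1 - B 1)*(Q 0 - B 0))} := by
    intro x hx
    simp only [Set.mem_insert_iff, Set.mem_singleton_iff] at hx
    rcases hx with h | h | h <;>
      [skip; skip; skip] <;>
      (show 0 ≤ d * ((C 0 - B 0)*(x 1 - B 1) - (C 1 - B 1)*(x 0 - B 0)); rw [h])
    · have : d * ((C 0 - B 0)*(A 1 - B 1) - (C 1 - B 1)*(A 0 - B 0)) = d^2 := by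
        rw [hddef]; ring
      rw [this]
      positivity
    · have : d * ((C 0 - B 0)*(B 1 - B 1) - (C 1 - B 1)*(B 0 - B 0)) = 0 := by ring
      rw [this]
    · have : d * ((C 0 - B 0)*(C 1 - B 1) - (C 1 - B 1)*(C 0 - B 0)) = 0 := by ring
      rw [this]
  exact convexHull_min hsub hconv hP

set_option maxHeartbeats 1000000 in
private lemma em_vertex (a1 a2 b1 b2 c1 c2 p1 p2 : ℝ)
    (hd : (b1-a1)*(c2-a2) - (b2-a2)*(c1-a1) ≠ 0)
    (hsb : 0 ≤ ((b1-a1)*(c2-a2) - (b2-a2)*(c1-a1)) * ((a1-c1)*(p2-c2) - (a2-c2)*(p1-c1)))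
    (hsc : 0 ≤ ((b1-a1)*(c2-a2) - (b2-a2)*(c1-a1)) * ((b1-a1)*(p2-a2) - (b2-a2)*(p1-a1))) :
    ((b1-a1)^2+(b2-a2)^2) * |(a1-c1)*(p2-c2) - (a2-c2)*(p1-c1)|
      + ((a1-c1)^2+(a2-c2)^2) * |(b1-a1)*(p2-a2) - (b2-a2)*(p1-a1)|
    ≤ Real.sqrt ((c1-b1)^2+(c2-b2)^2) * Real.sqrt ((a1-c1)^2+(a2-c2)^2)
      * Real.sqrt ((b1-a1)^2+(b2-a2)^2) * Real.sqrt ((p1-a1)^2+(p2-a2)^2) := by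
  refine em_key_sqrt ((c1-b1)^2+(c2-b2)^2) ((a1-c1)^2+(a2-c2)^2) ((b1-a1)^2+(b2-a2)^2)
    ((p1-a1)^2+(p2-a2)^2) _
    (((b1-a1)*(a1-c1) - (b2-a2)*(a2-c2))*((b1-c1)*(p1-a1) - (b2-c2)*(p2-a2))
      + ((b1-a1)*(a2-c2) + (b2-a2)*(a1-c1))*((b1-c1)*(p2-a2) + (b2-c2)*(p1-a1)))
    (by positivity) (by positivity) (by positivity) (by positivity) (by positivity) ?_
  have h1 := em_abs_pair hd hsb hsc ((b1-a1)^2+(b2-a2)^2) ((a1-c1)^2+(a2-c2)^2)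
  have h2 := em_vertex_id a1 a2 b1 b2 c1 c2 p1 p2
  linear_combination h1 + h2

set_option maxHeartbeats 2000000 in
private lemma em_arith (a1 a2 b1 b2 c1 c2 p1 p2 : ℝ)
    (hd : (b1-a1)*(c2-a2) - (b2-a2)*(c1-a1) ≠ 0)
    (hsa : 0 ≤ ((b1-a1)*(c2-a2) - (b2-a2)*(c1-a1)) * ((c1-b1)*(p2-b2) - (c2-b2)*(p1-b1)))
    (hsb : 0 ≤ ((b1-a1)*(c2-a2) - (b2-a2)*(c1-a1)) * ((a1-c1)*(p2-c2) - (a2-c2)*(p1-c1)))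
    (hsc : 0 ≤ ((b1-a1)*(c2-a2) - (b2-a2)*(c1-a1)) * ((b1-a1)*(p2-a2) - (b2-a2)*(p1-a1))) :
    2 * (|(c1-b1)*(p2-b2) - (c2-b2)*(p1-b1)| / Real.sqrt ((c1-b1)^2+(c2-b2)^2)
       + |(a1-c1)*(p2-c2) - (a2-c2)*(p1-c1)| / Real.sqrt ((a1-c1)^2+(a2-c2)^2)
       + |(b1-a1)*(p2-a2) - (b2-a2)*(p1-a1)| / Real.sqrt ((b1-a1)^2+(b2-a2)^2))
    ≤ Real.sqrt ((p1-a1)^2+(p2-a2)^2) + Real.sqrt ((p1-b1)^2+(p2-b2)^2)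
       + Real.sqrt ((p1-c1)^2+(p2-c2)^2) := by
  set d : ℝ := (b1-a1)*(c2-a2) - (b2-a2)*(c1-a1) with hddef
  set cra : ℝ := (c1-b1)*(p2-b2) - (c2-b2)*(p1-b1) with hcra
  set crb : ℝ := (a1-c1)*(p2-c2) - (a2-c2)*(p1-c1) with hcrb
  set crc : ℝ := (b1-a1)*(p2-a2) - (b2-a2)*(p1-a1) with hcrc
  set qa : ℝ := (c1-b1)^2+(c2-b2)^2 with hqadef
  set qb : ℝ := (a1-c1)^2+(a2-c2)^2 with hqbdef
  set qc : ℝ := (b1-a1)^2+(b2-a2)^2 with hqcdef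
  set qpa : ℝ := (p1-a1)^2+(p2-a2)^2 with hqpadef
  set qpb : ℝ := (p1-b1)^2+(p2-b2)^2 with hqpbdef
  set qpc : ℝ := (p1-c1)^2+(p2-c2)^2 with hqpcdef
  have hqa : 0 < qa := by
    rcases lt_or_ge 0 qa with hq | hq
    · exact hq
    · exfalso
      apply hd
      rw [hqadef] at hq
      obtain ⟨h0, h1⟩ := em_sq_zero (by linarith [hq] : (c1-b1)^2 + (c2-b2)^2 ≤ 0)
      rw [hddef]
      linear_combination (b1 - a1) * h1 - (b2 - a2) * h0
  have hqb : 0 < qb := by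
    rcases lt_or_ge 0 qb with hq | hq
    · exact hq
    · exfalso
      apply hd
      rw [hqbdef] at hq
      obtain ⟨h0, h1⟩ := em_sq_zero (by linarith [hq] : (a1-c1)^2 + (a2-c2)^2 ≤ 0)
      rw [hddef]
      linear_combination (b2 - a2) * h0 - (b1 - a1) * h1
  have hqc : 0 < qc := by
    rcases lt_or_ge 0 qc with hq | hq
    · exact hq
    · exfalso
      apply hd
      rw [hqcdef] at hq
      obtain ⟨h0, h1⟩ := em_sq_zero (by linarith [hq] : (b1-a1)^2 + (b2-a2)^2 ≤ 0)
      rw [hddef]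
      linear_combination (c2 - a2) * h0 - (c1 - a1) * h1
  have eB : (c1-b1)*(a2-b2) - (c2-b2)*(a1-b1) = d := by rw [hddef]; ring
  have eC : (a1-c1)*(b2-c2) - (a2-c2)*(b1-c1) = d := by rw [hddef]; ring
  have hVA : qc * |crb| + qb * |crc| ≤
      Real.sqrt qa * Real.sqrt qb * Real.sqrt qc * Real.sqrt qpa :=
    em_vertex a1 a2 b1 b2 c1 c2 p1 p2 hd hsb hsc
  have hVB : qa * |crc| + qc * |cra| ≤
      Real.sqrt qb * Real.sqrt qc * Real.sqrt qa * Real.sqrt qpb :=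
    em_vertex b1 b2 c1 c2 a1 a2 p1 p2 (by rw [eB]; exact hd) (by rw [eB]; exact hsc)
      (by rw [eB]; exact hsa)
  have hVC : qb * |cra| + qa * |crb| ≤
      Real.sqrt qc * Real.sqrt qa * Real.sqrt qb * Real.sqrt qpc :=
    em_vertex c1 c2 a1 a2 b1 b2 p1 p2 (by rw [eC]; exact hd) (by rw [eC]; exact hsa)
      (by rw [eC]; exact hsb)
  set x : ℝ := Real.sqrt qa with hxdef
  set y : ℝ := Real.sqrt qb with hydef
  set z : ℝ := Real.sqrt qc with hzdef
  have hx : 0 < x := Real.sqrt_pos.2 hqa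
  have hy : 0 < y := Real.sqrt_pos.2 hqb
  have hz : 0 < z := Real.sqrt_pos.2 hqc
  have hx2 : x^2 = qa := Real.sq_sqrt hqa.le
  have hy2 : y^2 = qb := Real.sq_sqrt hqb.le
  have hz2 : z^2 = qc := Real.sq_sqrt hqc.le
  have hA' : z^2 * |crb| + y^2 * |crc| ≤ x * y * z * Real.sqrt qpa := by
    rw [hz2, hy2]
    linarith [hVA]
  have hB' : x^2 * |crc| + z^2 * |cra| ≤ x * y * z * Real.sqrt qpb := by
    rw [hx2, hz2]
    have e : y * z * x * Real.sqrt qpb = x * y * z * Real.sqrt qpb := by ring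
    linarith [hVB, e.le]
  have hC' : y^2 * |cra| + x^2 * |crb| ≤ x * y * z * Real.sqrt qpc := by
    rw [hy2, hx2]
    have e : z * x * y * Real.sqrt qpc = x * y * z * Real.sqrt qpc := by ring
    linarith [hVC, e.le]
  have hrw : |cra| / x + |crb| / y + |crc| / z
      = (|cra| * (y*z) + |crb| * (x*z) + |crc| * (x*y)) / (x*y*z) := by
    field_simp
  rw [hrw]
  rw [show (2:ℝ) * ((|cra| * (y*z) + |crb| * (x*z) + |crc| * (x*y)) / (x*y*z))
      = (2 * (|cra| * (y*z) + |crb| * (x*z) + |crc| * (x*y))) / (x*y*z) from by ring]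
  rw [div_le_iff₀ (by positivity)]
  have pa : 0 ≤ |cra| * (y - z)^2 := mul_nonneg (abs_nonneg cra) (sq_nonneg (y - z))
  have pb : 0 ≤ |crb| * (x - z)^2 := mul_nonneg (abs_nonneg crb) (sq_nonneg (x - z))
  have pc : 0 ≤ |crc| * (x - y)^2 := mul_nonneg (abs_nonneg crc) (sq_nonneg (x - y))
  have ea : |cra| * (y - z)^2 = |cra| * y^2 - 2*(|cra| * (y*z)) + |cra| * z^2 := by ring
  have eb : |crb| * (x - z)^2 = |crb| * x^2 - 2*(|crb| * (x*z)) + |crb| * z^2 := by ring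
  have ec : |crc| * (x - y)^2 = |crc| * x^2 - 2*(|crc| * (x*y)) + |crc| * y^2 := by ring
  have ga : z^2 * |crb| + y^2 * |crc| = |crb| * z^2 + |crc| * y^2 := by ring
  have gb : x^2 * |crc| + z^2 * |cra| = |crc| * x^2 + |cra| * z^2 := by ring
  have gc : y^2 * |cra| + x^2 * |crb| = |cra| * y^2 + |crb| * x^2 := by ring
  have hrhs : (Real.sqrt qpa + Real.sqrt qpb + Real.sqrt qpc) * (x*y*z)
      = x * y * z * Real.sqrt qpa + x * y * z * Real.sqrt qpb + x * y * z * Real.sqrt qpc := by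
    ring
  rw [hrhs]
  rw [ea] at pa
  rw [eb] at pb
  rw [ec] at pc
  rw [ga] at hA'
  rw [gb] at hB'
  rw [gc] at hC'
  linarith [hA', hB', hC', pa, pb, pc]
set_option maxHeartbeats 2000000 in
/-- **Erdős–Mordell Inequality.** Let `P` be a point inside or on the boundary of a triangle
`ABC` in the Euclidean plane (i.e. `P` lies in the convex hull of `{A, B, C}`). Then the sum
of the distances from `P` to the three vertices is at least twice the sum of the distances
from `P` to the three side lines. -/
theorem erdos_mordell (A B C P : EuclideanSpace ℝ (Fin 2))
    (h : AffineIndependent ℝ ![A, B, C])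
    (hP : P ∈ convexHull ℝ ({A, B, C} : Set (EuclideanSpace ℝ (Fin 2)))) :
    dist P A + dist P B + dist P C ≥
      2 * (Metric.infDist P (affineSpan ℝ ({B, C} : Set (EuclideanSpace ℝ (Fin 2))) : Set _) +
           Metric.infDist P (affineSpan ℝ ({C, A} : Set (EuclideanSpace ℝ (Fin 2))) : Set _) +
           Metric.infDist P (affineSpan ℝ ({A, B} : Set (EuclideanSpace ℝ (Fin 2))) : Set _)) := by
  have hd : (B 0 - A 0)*(C 1 - A 1) - (B 1 - A 1)*(C 0 - A 0) ≠ 0 := em_det_ne_zero A B C h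
  have hsa := em_sign A B C P hP
  have hPbca : P ∈ convexHull ℝ ({B, C, A} : Set E2) := by
    have e : ({B, C, A} : Set E2) = {A, B, C} := by
      ext x; simp only [Set.mem_insert_iff, Set.mem_singleton_iff]; tauto
    rw [e]; exact hP
  have hPcab : P ∈ convexHull ℝ ({C, A, B} : Set E2) := by
    have e : ({C, A, B} : Set E2) = {A, B, C} := by
      ext x; simp only [Set.mem_insert_iff, Set.mem_singleton_iff]; tauto
    rw [e]; exact hP
  have hsb := em_sign B C A P hPbca
  have hsc := em_sign C A B P hPcab
  rw [show (C 0 - B 0)*(A 1 - B 1) - (C 1 - B 1)*(A 0 - B 0)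
      = (B 0 - A 0)*(C 1 - A 1) - (B 1 - A 1)*(C 0 - A 0) from by ring] at hsb
  rw [show (A 0 - C 0)*(B 1 - C 1) - (A 1 - C 1)*(B 0 - C 0)
      = (B 0 - A 0)*(C 1 - A 1) - (B 1 - A 1)*(C 0 - A 0) from by ring] at hsc
  have hqa : 0 < (C 0 - B 0)^2 + (C 1 - B 1)^2 := by
    rcases lt_or_ge 0 ((C 0 - B 0)^2 + (C 1 - B 1)^2) with hq | hq
    · exact hq
    · exfalso
      apply hd
      obtain ⟨h0, h1⟩ := em_sq_zero (by linarith [hq] : (C 0 - B 0)^2 + (C 1 - B 1)^2 ≤ 0)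
      linear_combination (B 0 - A 0) * h1 - (B 1 - A 1) * h0
  have hqb : 0 < (A 0 - C 0)^2 + (A 1 - C 1)^2 := by
    rcases lt_or_ge 0 ((A 0 - C 0)^2 + (A 1 - C 1)^2) with hq | hq
    · exact hq
    · exfalso
      apply hd
      obtain ⟨h0, h1⟩ := em_sq_zero (by linarith [hq] : (A 0 - C 0)^2 + (A 1 - C 1)^2 ≤ 0)
      linear_combination (B 1 - A 1) * h0 - (B 0 - A 0) * h1
  have hqc : 0 < (B 0 - A 0)^2 + (B 1 - A 1)^2 := by
    rcases lt_or_ge 0 ((B 0 - A 0)^2 + (B 1 - A 1)^2) with hq | hq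
    · exact hq
    · exfalso
      apply hd
      obtain ⟨h0, h1⟩ := em_sq_zero (by linarith [hq] : (B 0 - A 0)^2 + (B 1 - A 1)^2 ≤ 0)
      linear_combination (C 1 - A 1) * h0 - (C 0 - A 0) * h1
  have hI1 := em_infdist_le B C P hqa
  have hI2 := em_infdist_le C A P hqb
  have hI3 := em_infdist_le A B P hqc
  have harith := em_arith (A 0) (A 1) (B 0) (B 1) (C 0) (C 1) (P 0) (P 1) hd hsa hsb hsc
  rw [ge_iff_le, em_dist2 P A, em_dist2 P B, em_dist2 P C]
  linarith [harith, hI1, hI2, hI3]
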